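/- For m ≥ 3, the subgroup SO(m-1, ℝ) (embedded as block-diagonal rotations fixing the last coordinate) is a maximal connected closed subgroup of SO(m, ℝ): any connected closed subgroup of SO(m) strictly containing this copy of SO(m-1) equals SO(m). -/

import Mathlib

lemma so16_col_dot {n : ℕ} {A : Matrix (Fin n) (Fin n) ℝ}
    (hA : A ∈ Matrix.orthogonalGroup (Fin n) ℝ) (i j : Fin n) :
    ∑ k, A k i * A k j = if i = j then 1 else 0 := by
  have h : star A * A = 1 := (Matrix.mem_orthogonalGroup_iff' _ _).mp hA
  have := congrFun (congrFun h i) j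
  simpa [Matrix.mul_apply, Matrix.star_eq_conjTranspose, Matrix.conjTranspose_apply,
    Matrix.one_apply] using this

lemma so16_row_dot {n : ℕ} {A : Matrix (Fin n) (Fin n) ℝ}
    (hA : A ∈ Matrix.orthogonalGroup (Fin n) ℝ) (i j : Fin n) :
    ∑ k, A i k * A j k = if i = j then 1 else 0 := by
  have h : A * star A = 1 := (Matrix.mem_orthogonalGroup_iff _ _).mp hA
  have := congrFun (congrFun h i) j
  simpa [Matrix.mul_apply, Matrix.star_eq_conjTranspose, Matrix.conjTranspose_apply,
    Matrix.one_apply] using this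

/-- entry bound from a unit sum of squares -/
lemma so16_sq_le {n : ℕ} {x : Fin n → ℝ} (hx : ∑ k, x k * x k = 1) (i : Fin n) :
    x i * x i ≤ 1 := by
  calc x i * x i ≤ ∑ k, x k * x k :=
        Finset.single_le_sum (fun k _ => mul_self_nonneg (x k)) (Finset.mem_univ i)
  _ = 1 := hx

/-- If an orthogonal matrix has corner entry 1, its last row and column vanish off-diagonally. -/
lemma so16_corner {m : ℕ} {A : Matrix (Fin (m+1)) (Fin (m+1)) ℝ}
    (hA : A ∈ Matrix.orthogonalGroup (Fin (m+1)) ℝ) (h1 : A (Fin.last m) (Fin.last m) = 1) :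
    ∀ i : Fin m, A i.castSucc (Fin.last m) = 0 ∧ A (Fin.last m) i.castSucc = 0 := by
  have hcol : ∑ k, A k (Fin.last m) * A k (Fin.last m) = 1 := by
    simpa using so16_col_dot hA (Fin.last m) (Fin.last m)
  have hrow : ∑ k, A (Fin.last m) k * A (Fin.last m) k = 1 := by
    simpa using so16_row_dot hA (Fin.last m) (Fin.last m)
  rw [Fin.sum_univ_castSucc] at hcol hrow
  rw [h1] at hcol hrow
  have hcol0 : ∑ i : Fin m, A i.castSucc (Fin.last m) * A i.castSucc (Fin.last m) = 0 := by
    linarith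
  have hrow0 : ∑ i : Fin m, A (Fin.last m) i.castSucc * A (Fin.last m) i.castSucc = 0 := by
    linarith
  intro i
  constructor
  · have := (Finset.sum_eq_zero_iff_of_nonneg (fun k _ => mul_self_nonneg _)).mp hcol0 i
      (Finset.mem_univ i)
    exact mul_self_eq_zero.mp this
  · have := (Finset.sum_eq_zero_iff_of_nonneg (fun k _ => mul_self_nonneg _)).mp hrow0 i
      (Finset.mem_univ i)
    exact mul_self_eq_zero.mp this

/-- Any unit vector is the `i0` column of some orthogonal matrix. -/
lemma so16_exists_col {n : ℕ} (i0 : Fin n) (v : Fin n → ℝ) (hv : ∑ i, v i * v i = 1) :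
    ∃ M : Matrix (Fin n) (Fin n) ℝ, M ∈ Matrix.orthogonalGroup (Fin n) ℝ ∧
      (∀ i, M i i0 = v i) := by
  classical
  set E := EuclideanSpace ℝ (Fin n)
  have hdim : Module.finrank ℝ E = Fintype.card (Fin n) := by
    simp [E]
  set vE : E := WithLp.toLp 2 v
  have hon : Orthonormal ℝ (Set.restrict {i0} (fun _ : Fin n => vE)) := by
    rw [orthonormal_iff_ite]
    rintro ⟨i, hi⟩ ⟨j, hj⟩
    simp only [Set.mem_singleton_iff] at hi hj
    subst hi; subst hj
    simp only [Set.restrict_apply, if_pos rfl]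
    · have : (inner ℝ vE vE : ℝ) = ∑ k, v k * v k := by
        rw [PiLp.inner_apply]
        simp [vE, sq]
      show inner ℝ vE vE = _
      rw [this, hv]; simp
  obtain ⟨b, hb⟩ := hon.exists_orthonormalBasis_extension_of_card_eq hdim
  refine ⟨Matrix.of fun i j => b j i, ?_, fun i => by
    simp [Matrix.of_apply, hb i0 rfl, vE]⟩
  rw [Matrix.mem_orthogonalGroup_iff']
  ext i j
  have hinner : (inner ℝ (b i) (b j) : ℝ) = ∑ k, b i k * b j k := by
    simp [PiLp.inner_apply, RCLike.inner_apply, starRingEnd_apply, star_trivial, E, mul_comm]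
  have := orthonormal_iff_ite.mp b.orthonormal i j
  rw [hinner] at this
  simp only [Matrix.mul_apply, Matrix.star_eq_conjTranspose, Matrix.conjTranspose_apply,
    Matrix.of_apply, star_trivial, Matrix.one_apply, Matrix.transpose_apply]
  rw [← this]

/-- Any unit vector is the `i0` column of some *special* orthogonal matrix (n ≥ 2). -/
lemma so16_exists_col_det {n : ℕ} (hn : 2 ≤ n) (i0 : Fin n) (v : Fin n → ℝ)
    (hv : ∑ i, v i * v i = 1) :
    ∃ M : Matrix (Fin n) (Fin n) ℝ, M ∈ Matrix.orthogonalGroup (Fin n) ℝ ∧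
      M.det = 1 ∧ (∀ i, M i i0 = v i) := by
  classical
  obtain ⟨M, hM, hMc⟩ := so16_exists_col i0 v hv
  have hdet : M.det * M.det = 1 := by
    have h : star M * M = 1 := (Matrix.mem_orthogonalGroup_iff' _ _).mp hM
    have := congrArg Matrix.det h
    rwa [Matrix.det_mul, Matrix.star_eq_conjTranspose, Matrix.det_conjTranspose,
      star_trivial, Matrix.det_one] at this
  rcases mul_self_eq_one_iff.mp hdet with h1 | h1
  · exact ⟨M, hM, h1, hMc⟩
  · -- flip the sign of a column other than i0
    haveI : Nontrivial (Fin n) := Fin.nontrivial_iff_two_le.mpr hn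
    obtain ⟨i1, hi1⟩ := exists_ne i0
    set d : Fin n → ℝ := fun j => if j = i1 then -1 else 1 with hd
    set D : Matrix (Fin n) (Fin n) ℝ := Matrix.diagonal d with hD
    have hDmem : D ∈ Matrix.orthogonalGroup (Fin n) ℝ := by
      rw [Matrix.mem_orthogonalGroup_iff']
      have hstar : star D = D := by
        rw [hD, Matrix.star_eq_conjTranspose, Matrix.diagonal_conjTranspose,
          show star d = d from funext fun j => by simp]
      show star D * D = 1
      rw [hstar, hD, Matrix.diagonal_mul_diagonal,
        show (fun i => d i * d i) = (1 : Fin n → ℝ) from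
          funext fun j => by by_cases h : j = i1 <;> simp [hd, h],
        ]
      exact Matrix.diagonal_one
    have hDdet : D.det = -1 := by
      rw [hD, Matrix.det_diagonal, hd]
      rw [Finset.prod_ite_eq' Finset.univ i1 (fun _ => (-1 : ℝ))]
      simp
    refine ⟨M * D, mul_mem hM hDmem, ?_, ?_⟩
    · rw [Matrix.det_mul, h1, hDdet]; norm_num
    · intro i
      have hkey : ∀ k, M i k * D k i0 = if k = i0 then M i i0 * d i0 else 0 := by
        intro k
        by_cases h : k = i0
        · subst h; simp [hD, Matrix.diagonal_apply]
        · simp [hD, Matrix.diagonal_apply, h]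
      rw [Matrix.mul_apply]
      simp only [hkey]
      rw [Finset.sum_ite_eq' Finset.univ i0]
      simp [hd, Ne.symm hi1, hMc i]

/-- SO(n) acts transitively on the unit sphere for n ≥ 2 (matrix form). -/
lemma so16_trans {n : ℕ} (hn : 2 ≤ n) (v w : Fin n → ℝ)
    (hv : ∑ i, v i * v i = 1) (hw : ∑ i, w i * w i = 1) :
    ∃ R : Matrix (Fin n) (Fin n) ℝ, R ∈ Matrix.orthogonalGroup (Fin n) ℝ ∧
      R.det = 1 ∧ R.mulVec v = w := by
  have h0 : (0 : ℕ) < n := by omega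
  let i0 : Fin n := ⟨0, h0⟩
  obtain ⟨Mv, hMv, hMvdet, hMvc⟩ := so16_exists_col_det hn i0 v hv
  obtain ⟨Mw, hMw, hMwdet, hMwc⟩ := so16_exists_col_det hn i0 w hw
  refine ⟨Mw * star Mv, mul_mem hMw (Unitary.star_mem hMv), ?_, ?_⟩
  · rw [Matrix.det_mul, hMwdet, Matrix.star_eq_conjTranspose, Matrix.det_conjTranspose,
      star_trivial, hMvdet]
    norm_num
  · have hMvv : (star Mv).mulVec v = Pi.single i0 1 := by
      funext j
      have : ∑ k, Mv k j * Mv k i0 = if j = i0 then 1 else 0 := so16_col_dot hMv j i0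
      simp only [Matrix.mulVec, dotProduct, Matrix.star_eq_conjTranspose,
        Matrix.conjTranspose_apply, star_trivial]
      rw [Pi.single_apply]
      rw [← this]
      congr 1; funext k
      rw [← hMvc k]
    rw [← Matrix.mulVec_mulVec, hMvv]
    funext i
    simp only [Matrix.mulVec, dotProduct]
    have hkey : ∀ k, Mw i k * (Pi.single i0 1 : Fin n → ℝ) k = if k = i0 then Mw i i0 else 0 := by
      intro k; by_cases h : k = i0
      · subst h; simp
      · simp [Pi.single_apply, h]
    simp only [hkey]
    rw [Finset.sum_ite_eq' Finset.univ i0]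
    simp [hMwc i]


/-- Block-diagonal embedding of an m×m matrix into (m+1)×(m+1), fixing the last coordinate. -/
noncomputable def so16_emb {m : ℕ} (R : Matrix (Fin m) (Fin m) ℝ) :
    Matrix (Fin (m+1)) (Fin (m+1)) ℝ :=
  Matrix.reindex finSumFinEquiv finSumFinEquiv (Matrix.fromBlocks R 0 0 (1 : Matrix (Fin 1) (Fin 1) ℝ))

lemma so16_last_eq : ∀ m : ℕ, Fin.last m = finSumFinEquiv (Sum.inr (0 : Fin 1)) := by
  intro m; ext; simp

lemma so16_castSucc_eq {m : ℕ} (i : Fin m) : i.castSucc = finSumFinEquiv (Sum.inl i) := by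
  ext; simp

lemma so16_emb_apply_cc {m : ℕ} (R : Matrix (Fin m) (Fin m) ℝ) (i j : Fin m) :
    so16_emb R i.castSucc j.castSucc = R i j := by
  rw [so16_emb, so16_castSucc_eq i, so16_castSucc_eq j]
  simp [Matrix.reindex_apply]

lemma so16_emb_apply_cl {m : ℕ} (R : Matrix (Fin m) (Fin m) ℝ) (i : Fin m) :
    so16_emb R i.castSucc (Fin.last m) = 0 := by
  rw [so16_emb, so16_castSucc_eq i, so16_last_eq]
  simp [Matrix.reindex_apply]

lemma so16_emb_apply_lc {m : ℕ} (R : Matrix (Fin m) (Fin m) ℝ) (i : Fin m) :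
    so16_emb R (Fin.last m) i.castSucc = 0 := by
  rw [so16_emb, so16_castSucc_eq i, so16_last_eq]
  simp [Matrix.reindex_apply]

lemma so16_emb_apply_ll {m : ℕ} (R : Matrix (Fin m) (Fin m) ℝ) :
    so16_emb R (Fin.last m) (Fin.last m) = 1 := by
  rw [so16_emb, so16_last_eq]
  simp [Matrix.reindex_apply]

lemma so16_emb_mem {m : ℕ} {R : Matrix (Fin m) (Fin m) ℝ}
    (hR : R ∈ Matrix.orthogonalGroup (Fin m) ℝ) :
    so16_emb R ∈ Matrix.orthogonalGroup (Fin (m+1)) ℝ := by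
  rw [Matrix.mem_orthogonalGroup_iff']
  have hR' : star R * R = 1 := (Matrix.mem_orthogonalGroup_iff' _ _).mp hR
  show star (so16_emb R) * so16_emb R = 1
  rw [so16_emb, Matrix.reindex_apply]
  rw [Matrix.star_eq_conjTranspose, Matrix.conjTranspose_submatrix]
  rw [Matrix.submatrix_mul_equiv]
  rw [Matrix.fromBlocks_conjTranspose]
  simp only [Matrix.conjTranspose_zero, Matrix.conjTranspose_one]
  rw [Matrix.fromBlocks_multiply]
  simp only [Matrix.mul_zero, Matrix.zero_mul, add_zero, zero_add, Matrix.mul_one,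
    Matrix.one_mul]
  rw [show R.conjTranspose * R = 1 by rw [← Matrix.star_eq_conjTranspose]; exact hR']
  rw [Matrix.fromBlocks_one, Matrix.submatrix_one_equiv]

lemma so16_emb_det {m : ℕ} (R : Matrix (Fin m) (Fin m) ℝ) :
    (so16_emb R).det = R.det := by
  rw [so16_emb, Matrix.reindex_apply, Matrix.det_submatrix_equiv_self,
    Matrix.det_fromBlocks_zero₂₁, Matrix.det_one, mul_one]

lemma so16_isCompact (n : ℕ) :
    IsCompact ((Matrix.orthogonalGroup (Fin n) ℝ : Submonoid _) : Set (Matrix (Fin n) (Fin n) ℝ)) := by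
  have hsub : ((Matrix.orthogonalGroup (Fin n) ℝ : Submonoid _) : Set (Matrix (Fin n) (Fin n) ℝ))
      ⊆ Set.univ.pi fun _ : Fin n => Set.univ.pi fun _ : Fin n => Set.Icc (-1 : ℝ) 1 := by
    intro A hA
    intro i _
    intro j _
    have hrow : ∑ k, A i k * A i k = 1 := by simpa using so16_row_dot hA i i
    have := so16_sq_le hrow j
    constructor <;> nlinarith [this]
  have hcompact : IsCompact (Set.univ.pi fun _ : Fin n =>
      Set.univ.pi fun _ : Fin n => Set.Icc (-1 : ℝ) 1) :=
    isCompact_univ_pi fun _ => isCompact_univ_pi fun _ => isCompact_Icc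
  refine IsCompact.of_isClosed_subset hcompact ?_ hsub
  have hcont : Continuous fun A : Matrix (Fin n) (Fin n) ℝ => A * star A := by
    exact (continuous_id.matrix_mul (continuous_id.matrix_conjTranspose))
  have : ((Matrix.orthogonalGroup (Fin n) ℝ : Submonoid _) : Set (Matrix (Fin n) (Fin n) ℝ))
      = (fun A : Matrix (Fin n) (Fin n) ℝ => A * star A) ⁻¹' {1} := by
    ext A
    simp [Matrix.mem_orthogonalGroup_iff, Matrix.star_eq_conjTranspose,
      Matrix.conjTranspose_eq_transpose_of_trivial]
  rw [this]
  exact isClosed_singleton.preimage hcont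

instance so16_compactSpace (n : ℕ) : CompactSpace (Matrix.orthogonalGroup (Fin n) ℝ) :=
  isCompact_iff_compactSpace.mp (so16_isCompact n)

set_option maxHeartbeats 1000000 in
/-- `SO(m)` embedded block-diagonally (as `diag(B, 1)`) is a maximal connected closed subgroup
of `SO(m+1)` (m + 1 ≥ 3): any connected closed subgroup of `SO(m+1)` strictly containing the
embedded copy of `SO(m)` equals `SO(m+1)`. -/
theorem stmt16 (m : ℕ) (hm : 2 ≤ m)
    (K : Subgroup (Matrix.orthogonalGroup (Fin (m + 1)) ℝ))
    (hKclosed : IsClosed (K : Set (Matrix.orthogonalGroup (Fin (m + 1)) ℝ)))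
    (hKconn : IsConnected (K : Set (Matrix.orthogonalGroup (Fin (m + 1)) ℝ)))
    (hKSO : ∀ A ∈ K, ((A : Matrix (Fin (m + 1)) (Fin (m + 1)) ℝ)).det = 1)
    (hsub : ∀ A : Matrix.orthogonalGroup (Fin (m + 1)) ℝ,
      ((A : Matrix (Fin (m + 1)) (Fin (m + 1)) ℝ)).det = 1 →
      (A : Matrix (Fin (m + 1)) (Fin (m + 1)) ℝ) (Fin.last m) (Fin.last m) = 1 →
      (∀ i : Fin m, (A : Matrix (Fin (m + 1)) (Fin (m + 1)) ℝ) i.castSucc (Fin.last m) = 0 ∧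
        (A : Matrix (Fin (m + 1)) (Fin (m + 1)) ℝ) (Fin.last m) i.castSucc = 0) →
      A ∈ K)
    (hstrict : ∃ A ∈ K, ¬ ((A : Matrix (Fin (m + 1)) (Fin (m + 1)) ℝ) (Fin.last m)
        (Fin.last m) = 1 ∧
      ∀ i : Fin m, (A : Matrix (Fin (m + 1)) (Fin (m + 1)) ℝ) i.castSucc (Fin.last m) = 0 ∧
        (A : Matrix (Fin (m + 1)) (Fin (m + 1)) ℝ) (Fin.last m) i.castSucc = 0)) :
    ∀ A : Matrix.orthogonalGroup (Fin (m + 1)) ℝ,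
      ((A : Matrix (Fin (m + 1)) (Fin (m + 1)) ℝ)).det = 1 → A ∈ K := by
  classical
  set G := Matrix.orthogonalGroup (Fin (m + 1)) ℝ with hG
  set f : G → ℝ := fun A => (A : Matrix (Fin (m + 1)) (Fin (m + 1)) ℝ) (Fin.last m) (Fin.last m)
    with hf
  set C : Set ℝ := f '' (K : Set G) with hC
  have hfc : Continuous f := continuous_subtype_val.matrix_elem _ _
  have hKcomp : IsCompact (K : Set G) := hKclosed.isCompact
  have hCcomp : IsCompact C := hKcomp.image hfc
  have hCconn : IsPreconnected C :=
    ((hKconn.image f hfc.continuousOn)).isPreconnected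
  have h1C : (1 : ℝ) ∈ C := ⟨1, K.one_mem, by simp [hf]⟩
  have hCbound : ∀ c ∈ C, -1 ≤ c ∧ c ≤ 1 := by
    rintro c ⟨A, hAK, rfl⟩
    have hrow : ∑ k, (A : Matrix (Fin (m+1)) (Fin (m+1)) ℝ) (Fin.last m) k *
        (A : Matrix (Fin (m+1)) (Fin (m+1)) ℝ) (Fin.last m) k = 1 := by
      simpa using so16_row_dot A.2 (Fin.last m) (Fin.last m)
    have := so16_sq_le hrow (Fin.last m)
    constructor <;> nlinarith [this]
  have hIcc : ∀ {x y : ℝ}, x ∈ C → y ∈ C → Set.Icc x y ⊆ C := fun hx hy =>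
    hCconn.Icc_subset hx hy
  -- The orbit of the last basis vector under K contains every unit vector whose last
  -- coordinate lies in C.
  have horb : ∀ c ∈ C, ∀ x : Fin (m+1) → ℝ, (∑ i, x i * x i = 1) → x (Fin.last m) = c →
      ∃ B, B ∈ K ∧ ∀ i, (B : Matrix (Fin (m+1)) (Fin (m+1)) ℝ) i (Fin.last m) = x i := by
    rintro c ⟨A, hAK, rfl⟩ x hx hxe
    set y : Fin (m+1) → ℝ := fun i => (A : Matrix (Fin (m+1)) (Fin (m+1)) ℝ) i (Fin.last m)
      with hy
    have hysum : ∑ i, y i * y i = 1 := by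
      simpa [hy] using so16_col_dot A.2 (Fin.last m) (Fin.last m)
    have hye : y (Fin.last m) = f A := rfl
    have hcsq : f A * f A ≤ 1 := by
      have := so16_sq_le hx (Fin.last m); rwa [hxe] at this
    have hysplit : ∑ j : Fin m, y j.castSucc * y j.castSucc = 1 - f A * f A := by
      have := hysum
      rw [Fin.sum_univ_castSucc, hye] at this
      linarith
    have hxsplit : ∑ j : Fin m, x j.castSucc * x j.castSucc = 1 - f A * f A := by
      have := hx
      rw [Fin.sum_univ_castSucc, hxe] at this
      linarith
    rcases eq_or_lt_of_le hcsq with heq | hlt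
    · -- degenerate case : the sphere level is a single point
      have hyz : ∀ j : Fin m, y j.castSucc = 0 := by
        intro j
        have h0 : ∑ j : Fin m, y j.castSucc * y j.castSucc = 0 := by rw [hysplit]; linarith
        have := (Finset.sum_eq_zero_iff_of_nonneg
          (fun k _ => mul_self_nonneg (y k.castSucc))).mp h0 j (Finset.mem_univ j)
        exact mul_self_eq_zero.mp this
      have hxz : ∀ j : Fin m, x j.castSucc = 0 := by
        intro j
        have h0 : ∑ j : Fin m, x j.castSucc * x j.castSucc = 0 := by rw [hxsplit]; linarith
        have := (Finset.sum_eq_zero_iff_of_nonneg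
          (fun k _ => mul_self_nonneg (x k.castSucc))).mp h0 j (Finset.mem_univ j)
        exact mul_self_eq_zero.mp this
      refine ⟨A, hAK, fun i => ?_⟩
      refine Fin.lastCases ?_ (fun j => ?_) i
      · exact hxe.symm
      · rw [hxz j]; exact hyz j
    · -- generic case: rotate within the level sphere using SO(m)
      set s : ℝ := Real.sqrt (1 - f A * f A) with hs
      have hspos : 0 < s := Real.sqrt_pos.mpr (by linarith)
      have hss : s * s = 1 - f A * f A := Real.mul_self_sqrt (by linarith)
      set v : Fin m → ℝ := fun j => y j.castSucc / s with hv
      set w : Fin m → ℝ := fun j => x j.castSucc / s with hw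
      have hvsum : ∑ j, v j * v j = 1 := by
        have : ∑ j, v j * v j = (∑ j : Fin m, y j.castSucc * y j.castSucc) / (s * s) := by
          rw [Finset.sum_div]
          refine Finset.sum_congr rfl fun j _ => ?_
          simp only [hv]
          rw [div_mul_div_comm]
        rw [this, hysplit, hss]
        exact div_self (ne_of_gt (by linarith : (0:ℝ) < 1 - f A * f A))
      have hwsum : ∑ j, w j * w j = 1 := by
        have : ∑ j, w j * w j = (∑ j : Fin m, x j.castSucc * x j.castSucc) / (s * s) := by
          rw [Finset.sum_div]
          refine Finset.sum_congr rfl fun j _ => ?_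
          simp only [hw]
          rw [div_mul_div_comm]
        rw [this, hxsplit, hss]
        exact div_self (ne_of_gt (by linarith : (0:ℝ) < 1 - f A * f A))
      obtain ⟨R, hR, hRdet, hRv⟩ := so16_trans hm v w hvsum hwsum
      have hRy : ∀ j : Fin m, ∑ k, R j k * y k.castSucc = x j.castSucc := by
        intro j
        have h := congrFun hRv j
        simp only [Matrix.mulVec, dotProduct] at h
        have h2 : ∑ k, R j k * y k.castSucc = s * ∑ k, R j k * v k := by
          rw [Finset.mul_sum]
          refine Finset.sum_congr rfl fun k _ => ?_
          simp only [hv]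
          field_simp
        rw [h2, h]
        simp only [hw]
        field_simp
      set Rg : G := ⟨so16_emb R, so16_emb_mem hR⟩ with hRg
      have hRgK : Rg ∈ K := by
        refine hsub Rg ?_ ?_ fun i => ⟨?_, ?_⟩
        · show (so16_emb R).det = 1
          rw [so16_emb_det, hRdet]
        · exact so16_emb_apply_ll R
        · exact so16_emb_apply_cl R i
        · exact so16_emb_apply_lc R i
      refine ⟨Rg * A, K.mul_mem hRgK hAK, fun i => ?_⟩
      have hcol : ((Rg * A : G) : Matrix (Fin (m+1)) (Fin (m+1)) ℝ) i (Fin.last m)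
          = ∑ k, so16_emb R i k * y k := by
        rfl
      rw [hcol, Fin.sum_univ_castSucc]
      refine Fin.lastCases ?_ (fun j => ?_) i
      · rw [so16_emb_apply_ll R, hxe]
        have hz : ∀ j : Fin m, so16_emb R (Fin.last m) j.castSucc * y j.castSucc = 0 := by
          intro j; rw [so16_emb_apply_lc R j]; ring
        rw [Finset.sum_congr rfl (fun j _ => hz j), Finset.sum_const_zero, hye]
        ring
      · rw [so16_emb_apply_cl R j]
        have hz : ∀ k : Fin m, so16_emb R j.castSucc k.castSucc * y k.castSucc
            = R j k * y k.castSucc := by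
          intro k; rw [so16_emb_apply_cc R j k]
        rw [Finset.sum_congr rfl (fun k _ => hz k), hRy j]
        ring
  -- Composition pushes levels downward
  have hmulC : ∀ A : G, A ∈ K → f A * f A < 1 → ∀ β ∈ C,
      f A * β - Real.sqrt (1 - f A * f A) * Real.sqrt (1 - β * β) ∈ C := by
    intro A hAK hA1 β hβ
    set r : Fin (m+1) → ℝ := fun k => (A : Matrix (Fin (m+1)) (Fin (m+1)) ℝ) (Fin.last m) k
      with hr
    have hrsum : ∑ k, r k * r k = 1 := by
      simpa [hr] using so16_row_dot A.2 (Fin.last m) (Fin.last m)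
    have hre : r (Fin.last m) = f A := rfl
    have hrsplit : ∑ j : Fin m, r j.castSucc * r j.castSucc = 1 - f A * f A := by
      have := hrsum
      rw [Fin.sum_univ_castSucc, hre] at this
      linarith
    set s : ℝ := Real.sqrt (1 - f A * f A) with hs
    have hspos : 0 < s := Real.sqrt_pos.mpr (by linarith)
    have hss : s * s = 1 - f A * f A := Real.mul_self_sqrt (by linarith)
    have hβb := hCbound β hβ
    set t : ℝ := Real.sqrt (1 - β * β) with ht
    have htnn : 0 ≤ t := Real.sqrt_nonneg _
    have htt : t * t = 1 - β * β := Real.mul_self_sqrt (by nlinarith [hβb.1, hβb.2])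
    set x : Fin (m+1) → ℝ := fun i => if i = Fin.last m then β else -(t/s) * r i with hxdef
    have hxlast : x (Fin.last m) = β := by rw [hxdef]; simp
    have hxcs : ∀ j : Fin m, x j.castSucc = -(t/s) * r j.castSucc := by
      intro j
      rw [hxdef]
      simp [(Fin.castSucc_lt_last j).ne]
    have hxsum : ∑ i, x i * x i = 1 := by
      rw [Fin.sum_univ_castSucc, hxlast]
      have : ∀ j : Fin m, x j.castSucc * x j.castSucc
          = (t/s) * (t/s) * (r j.castSucc * r j.castSucc) := by
        intro j; rw [hxcs j]; ring
      rw [Finset.sum_congr rfl (fun j _ => this j), ← Finset.mul_sum, hrsplit, ← hss]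
      have hts : t / s * (t / s) * (s * s) = t * t := by field_simp
      rw [hts, htt]
      ring
    obtain ⟨B, hBK, hBcol⟩ := horb β hβ x hxsum hxlast
    have hABK : A * B ∈ K := K.mul_mem hAK hBK
    refine ⟨A * B, hABK, ?_⟩
    have : f (A * B) = ∑ k, r k * x k := by
      rw [hf]
      show ((A * B : G) : Matrix (Fin (m+1)) (Fin (m+1)) ℝ) (Fin.last m) (Fin.last m)
        = ∑ k, r k * x k
      have : ((A * B : G) : Matrix (Fin (m+1)) (Fin (m+1)) ℝ) (Fin.last m) (Fin.last m)
          = ∑ k, (A : Matrix (Fin (m+1)) (Fin (m+1)) ℝ) (Fin.last m) k *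
            (B : Matrix (Fin (m+1)) (Fin (m+1)) ℝ) k (Fin.last m) := rfl
      rw [this]
      refine Finset.sum_congr rfl fun k _ => ?_
      rw [hBcol k, hr]
    rw [this, Fin.sum_univ_castSucc, hxlast, hre]
    have hterm : ∀ j : Fin m, r j.castSucc * x j.castSucc
        = -(t/s) * (r j.castSucc * r j.castSucc) := by
      intro j; rw [hxcs j]; ring
    rw [Finset.sum_congr rfl (fun j _ => hterm j), ← Finset.mul_sum, hrsplit, ← hss]
    have hdiv : -(t/s)*(s*s) = -(s*t) := by field_simp
    rw [hdiv]; ring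
  -- The infimum of C is -1
  have hCne : C.Nonempty := ⟨1, h1C⟩
  have haC : sInf C ∈ C := hCcomp.sInf_mem hCne
  have hale : ∀ c ∈ C, sInf C ≤ c := fun c hc => csInf_le hCcomp.bddBelow hc
  obtain ⟨A0, hA0K, hA0⟩ := hstrict
  have hc0 : f A0 ∈ C := ⟨A0, hA0K, rfl⟩
  have hc0ne : f A0 ≠ 1 := fun h => hA0 ⟨h, so16_corner A0.2 h⟩
  have hc0lt : f A0 < 1 := lt_of_le_of_ne (hCbound _ hc0).2 hc0ne
  have ha_lt1 : sInf C < 1 := lt_of_le_of_lt (hale _ hc0) hc0lt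
  have ha_ge : -1 ≤ sInf C := (hCbound _ haC).1
  have haneg1 : sInf C = -1 := by
    by_contra hne
    have ha_gt : -1 < sInf C := lt_of_le_of_ne ha_ge (Ne.symm hne)
    have haa : sInf C * sInf C < 1 := by nlinarith
    obtain ⟨A, hAK, hfA⟩ := haC
    rcases le_or_gt (sInf C) 0 with h0 | h0
    · have hβ : -sInf C ∈ C := hIcc ⟨A, hAK, hfA⟩ h1C ⟨by linarith, by linarith⟩
      have hmem := hmulC A hAK (by rw [hfA]; exact haa) (-sInf C) hβ
      rw [hfA] at hmem
      have hval : sInf C * (-sInf C) -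
          Real.sqrt (1 - sInf C * sInf C) * Real.sqrt (1 - (-sInf C) * (-sInf C)) = -1 := by
        rw [show (1 - (-sInf C) * (-sInf C)) = 1 - sInf C * sInf C by ring,
          Real.mul_self_sqrt (by nlinarith)]
        ring
      rw [hval] at hmem
      have := hale _ hmem
      linarith
    · have hmem := hmulC A hAK (by rw [hfA]; exact haa) (sInf C) ⟨A, hAK, hfA⟩
      rw [hfA, Real.mul_self_sqrt (by nlinarith)] at hmem
      have := hale _ hmem
      nlinarith
  have hIccC : Set.Icc (-1 : ℝ) 1 ⊆ C := by
    rw [← haneg1]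
    exact hIcc haC h1C
  -- Conclusion
  intro A hdet
  set x : Fin (m+1) → ℝ := fun i => (A : Matrix (Fin (m+1)) (Fin (m+1)) ℝ) i (Fin.last m)
    with hx
  have hxsum : ∑ i, x i * x i = 1 := by
    simpa [hx] using so16_col_dot A.2 (Fin.last m) (Fin.last m)
  have hxb := so16_sq_le hxsum (Fin.last m)
  have hxeC : x (Fin.last m) ∈ C := hIccC ⟨by nlinarith, by nlinarith⟩
  obtain ⟨B, hBK, hBcol⟩ := horb (x (Fin.last m)) hxeC x hxsum rfl
  set M : G := B⁻¹ * A with hM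
  have hMmat : (M : Matrix (Fin (m+1)) (Fin (m+1)) ℝ)
      = star (B : Matrix (Fin (m+1)) (Fin (m+1)) ℝ) * A := rfl
  have hMee : (M : Matrix (Fin (m+1)) (Fin (m+1)) ℝ) (Fin.last m) (Fin.last m) = 1 := by
    rw [hMmat]
    have : (star (B : Matrix (Fin (m+1)) (Fin (m+1)) ℝ) *
        (A : Matrix (Fin (m+1)) (Fin (m+1)) ℝ)) (Fin.last m) (Fin.last m)
        = ∑ k, (B : Matrix (Fin (m+1)) (Fin (m+1)) ℝ) k (Fin.last m) * x k := by
      rw [Matrix.mul_apply]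
      refine Finset.sum_congr rfl fun k _ => ?_
      rw [Matrix.star_eq_conjTranspose, Matrix.conjTranspose_apply, star_trivial, hx]
    rw [this]
    have : ∀ k, (B : Matrix (Fin (m+1)) (Fin (m+1)) ℝ) k (Fin.last m) * x k = x k * x k := by
      intro k; rw [hBcol k]
    rw [Finset.sum_congr rfl (fun k _ => this k), hxsum]
  have hMdet : (M : Matrix (Fin (m+1)) (Fin (m+1)) ℝ).det = 1 := by
    rw [hMmat, Matrix.det_mul, Matrix.star_eq_conjTranspose, Matrix.det_conjTranspose,
      star_trivial, hKSO B hBK, hdet]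
    norm_num
  have hMK : M ∈ K := hsub M hMdet hMee (so16_corner M.2 hMee)
  have hBM : B * M = A := by
    rw [hM]
    group
  rw [← hBM]
  exact K.mul_mem hBK hMK
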